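/- Let K be a compact Hausdorff space admitting local compensation. Let (f, μ) ∈ B_{C(K)} × B_{M(K)} with μ(f) ≥ 1 − ε²/6 for some 0 < ε < 1. Then there exists (f₀, μ₀) ∈ Π(C(K)) such that ‖f − f₀‖ ≤ ε and ‖μ − μ₀‖ ≤ ε. -/

import Mathlib

open MeasureTheory

noncomputable section

variable {K : Type*} [TopologicalSpace K] [MeasurableSpace K]

/-- The integral of a function against a signed measure. -/
def sInt (μ : SignedMeasure K) (f : K → ℝ) : ℝ :=
  ∫ x, f x ∂μ.toJordanDecomposition.posPart - ∫ x, f x ∂μ.toJordanDecomposition.negPart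

/-- The total variation norm of a signed measure. -/
def mNorm (μ : SignedMeasure K) : ℝ := (μ.totalVariation Set.univ).toReal

/-- `ν` is a compensation of `μ`: if `μ(K) > 0` then `0 ≤ ν ≤ μ⁺` and `ν(K) = μ(K)`;
if `μ(K) ≤ 0` then `ν = 0`. -/
def IsCompensation (μ ν : SignedMeasure K) : Prop :=
  if 0 < μ Set.univ then
    0 ≤ ν ∧ ν ≤ μ.toJordanDecomposition.posPart.toSignedMeasure ∧ ν Set.univ = μ Set.univ
  else ν = 0

/-- A family of signed measures indexed by a topological space is weak*-continuous. -/
def WStarContinuousFamily {T : Type*} [TopologicalSpace T] (F : T → SignedMeasure K) : Prop :=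
  ∀ g : C(K, ℝ), Continuous fun t => sInt (F t) g

/-- Membership in `W(K)`: a weak*-continuous map from `K` into the closed unit ball of the
space `M(K)` of regular Borel signed measures. -/
def MemW (F : K → SignedMeasure K) : Prop :=
  WStarContinuousFamily F ∧ ∀ t, (F t).totalVariation.Regular ∧ mNorm (F t) ≤ 1

/-- `K` admits local compensation: every element of `W(K)` admits a compensation in `W(K)`. -/
def AdmitsLocalCompensation (K : Type*) [TopologicalSpace K] [MeasurableSpace K] : Prop :=
  ∀ F : K → SignedMeasure K, MemW F →
    ∃ G : K → SignedMeasure K, MemW G ∧ ∀ t, IsCompensation (F t) (G t)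

/-- The weak* topology on signed measures. -/
instance wstarTopology : TopologicalSpace (SignedMeasure K) :=
  TopologicalSpace.induced (fun μ (g : C(K, ℝ)) => sInt μ g) inferInstance

/-- `M(K)`: the regular Borel signed measures on `K`, with the weak* topology. -/
def MK (K : Type*) [TopologicalSpace K] [MeasurableSpace K] : Type _ :=
  {μ : SignedMeasure K // μ.totalVariation.Regular}

instance : TopologicalSpace (MK K) := instTopologicalSpaceSubtype

/-- The closed unit ball `B_{M(K)}` of `M(K)`, with the weak* topology. -/
def BMK (K : Type*) [TopologicalSpace K] [MeasurableSpace K] : Type _ :=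
  {μ : SignedMeasure K // μ.totalVariation.Regular ∧ mNorm μ ≤ 1}

instance : TopologicalSpace (BMK K) := instTopologicalSpaceSubtype

/-- A compensation function on `K`: a weak*-to-weak*-continuous map `ξ : M(K) → M(K)` such
that `ξ μ` is a compensation of `μ` for every `μ ∈ M(K)`. -/
def IsCompensationFunction (ξ : MK K → MK K) : Prop :=
  Continuous ξ ∧ ∀ μ : MK K, IsCompensation μ.1 (ξ μ).1

/-- A `B_{M(K)}`-compensation function on `K`. -/
def IsBallCompensationFunction (ξ : BMK K → MK K) : Prop :=
  Continuous ξ ∧ ∀ μ : BMK K, IsCompensation μ.1 (ξ μ).1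

/-- The numerical radius of an operator on a real Banach space. -/
def NumericalRadius {X : Type*} [NormedAddCommGroup X] [NormedSpace ℝ X] (T : X →L[ℝ] X) : ℝ :=
  sSup {r | ∃ (x : X) (φ : X →L[ℝ] ℝ), ‖x‖ = 1 ∧ ‖φ‖ = 1 ∧ φ x = 1 ∧ r = |φ (T x)|}

/-- The Bishop-Phelps-Bollobás property for numerical radius, witnessed by a
given function `δ`. -/
def HasBPBNumericalRadiusWith (X : Type*) [NormedAddCommGroup X] [NormedSpace ℝ X]
    (δ : ℝ → ℝ) : Prop :=
  ∀ ε : ℝ, 0 < ε → ε < 1 →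
    ∀ T : X →L[ℝ] X, NumericalRadius T = 1 →
      ∀ (x : X) (φ : X →L[ℝ] ℝ), ‖x‖ = 1 → ‖φ‖ = 1 → φ x = 1 →
        1 - δ ε ≤ φ (T x) →
        ∃ (T₀ : X →L[ℝ] X) (x₀ : X) (φ₀ : X →L[ℝ] ℝ),
          NumericalRadius T₀ = 1 ∧ ‖x₀‖ = 1 ∧ ‖φ₀‖ = 1 ∧ φ₀ x₀ = 1 ∧
          φ₀ (T₀ x₀) = 1 ∧ NumericalRadius (T - T₀) ≤ ε ∧ ‖x - x₀‖ ≤ ε ∧ ‖φ - φ₀‖ ≤ ε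

/-- The Bishop-Phelps-Bollobás property for numerical radius. -/
def HasBPBNumericalRadius (X : Type*) [NormedAddCommGroup X] [NormedSpace ℝ X] : Prop :=
  ∃ δ : ℝ → ℝ, (∀ ε : ℝ, 0 < ε → ε < 1 → 0 < δ ε ∧ δ ε < 1) ∧ HasBPBNumericalRadiusWith X δ

/-- A closeness function for `K`: a continuous function `c` on
`{(x,y,z) ∈ K³ : y ≠ z}` with values in `[-1,1]` such that `c(x,y,z) = -c(x,z,y)`
whenever `y ≠ z` and `c(x,x,z) = 1` whenever `x ≠ z`. -/
def IsClosenessFunction (K : Type*) [TopologicalSpace K]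
    (c : {p : K × K × K // p.2.1 ≠ p.2.2} → ℝ) : Prop :=
  Continuous c ∧ (∀ p, c p ∈ Set.Icc (-1 : ℝ) 1) ∧
    (∀ (x y z : K) (h : y ≠ z), c ⟨(x, y, z), h⟩ = -c ⟨(x, z, y), h.symm⟩) ∧
    (∀ (x z : K) (h : x ≠ z), c ⟨(x, x, z), h⟩ = 1)

open scoped NNReal ENNReal

omit [TopologicalSpace K] in
lemma mNorm_le_of_repr {P N : Measure K} [IsFiniteMeasure P] [IsFiniteMeasure N]
    (x : SignedMeasure K)
    (h : ∀ i : Set K, MeasurableSet i → x i = (P i).toReal - (N i).toReal) :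
    mNorm x ≤ (P Set.univ).toReal + (N Set.univ).toReal := by
  obtain ⟨i, hi₁, hi₂, hi₃, hpos, hneg⟩ := x.toJordanDecomposition_spec
  have hP : ∀ j : Set K, MeasurableSet j → x j ≤ (P Set.univ).toReal := by
    intro j hj
    rw [h j hj]
    have h1 : (P j).toReal ≤ (P Set.univ).toReal :=
      ENNReal.toReal_mono (measure_ne_top _ _) (measure_mono (Set.subset_univ _))
    have h2 : (0:ℝ) ≤ (N j).toReal := ENNReal.toReal_nonneg
    linarith
  have hN : ∀ j : Set K, MeasurableSet j → -x j ≤ (N Set.univ).toReal := by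
    intro j hj
    rw [h j hj]
    have h1 : (N j).toReal ≤ (N Set.univ).toReal :=
      ENNReal.toReal_mono (measure_ne_top _ _) (measure_mono (Set.subset_univ _))
    have h2 : (0:ℝ) ≤ (P j).toReal := ENNReal.toReal_nonneg
    linarith
  have e1 : (x.toJordanDecomposition.posPart Set.univ).toReal = x i := by
    rw [hpos, SignedMeasure.toMeasureOfZeroLE_apply _ hi₂ hi₁ MeasurableSet.univ]
    simp
  have e2 : (x.toJordanDecomposition.negPart Set.univ).toReal = -x iᶜ := by
    rw [hneg, SignedMeasure.toMeasureOfLEZero_apply _ hi₃ hi₁.compl MeasurableSet.univ]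
    simp
  have e3 : mNorm x = (x.toJordanDecomposition.posPart Set.univ).toReal
      + (x.toJordanDecomposition.negPart Set.univ).toReal := by
    rw [mNorm, SignedMeasure.totalVariation, Measure.add_apply,
      ENNReal.toReal_add (measure_ne_top _ _) (measure_ne_top _ _)]
  rw [e3, e1, e2]
  exact add_le_add (hP i hi₁) (hN iᶜ hi₁.compl)

omit [TopologicalSpace K] in
lemma int_le_piece (ρ : Measure K) [IsFiniteMeasure ρ] (g : K → ℝ) (hg : Integrable g ρ)
    (U : Set K) (hU : MeasurableSet U) (c : ℝ)
    (h1 : ∀ x, g x ≤ 1) (h2 : ∀ x, x ∉ U → g x ≤ c) :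
    ∫ x, g x ∂ρ ≤ (ρ U).toReal + c * (ρ Uᶜ).toReal := by
  have hsplit : (∫ x in U, g x ∂ρ) + ∫ x in Uᶜ, g x ∂ρ = ∫ x, g x ∂ρ :=
    integral_add_compl hU hg
  have hA : ∫ x in U, g x ∂ρ ≤ (ρ U).toReal := by
    calc ∫ x in U, g x ∂ρ ≤ ∫ _x in U, (1:ℝ) ∂ρ :=
          setIntegral_mono_on hg.integrableOn (integrable_const 1) hU (fun x _ => h1 x)
      _ = (ρ U).toReal := by simp [measureReal_def]
  have hAc : ∫ x in Uᶜ, g x ∂ρ ≤ c * (ρ Uᶜ).toReal := by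
    calc ∫ x in Uᶜ, g x ∂ρ ≤ ∫ _x in Uᶜ, c ∂ρ :=
          setIntegral_mono_on hg.integrableOn (integrable_const c) hU.compl
            (fun x hx => h2 x hx)
      _ = c * (ρ Uᶜ).toReal := by simp [mul_comm, measureReal_def]
  linarith


set_option maxHeartbeats 1000000

/-- A Bishop-Phelps-Bollobás theorem for functionals on `C(K)`, for `K`
admitting local compensation. -/
theorem stmt5 (K : Type*) [TopologicalSpace K] [CompactSpace K] [T2Space K]
    [MeasurableSpace K] [BorelSpace K]
    (hK : AdmitsLocalCompensation K)
    (f : C(K, ℝ)) (μ : SignedMeasure K) (hμreg : μ.totalVariation.Regular)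
    (hf : ‖f‖ ≤ 1) (hμ : mNorm μ ≤ 1)
    (ε : ℝ) (hε0 : 0 < ε) (hε1 : ε < 1)
    (h : 1 - ε ^ 2 / 6 ≤ sInt μ f) :
    ∃ (f₀ : C(K, ℝ)) (μ₀ : SignedMeasure K), μ₀.totalVariation.Regular ∧
      ‖f₀‖ = 1 ∧ mNorm μ₀ = 1 ∧ sInt μ₀ f₀ = 1 ∧ ‖f - f₀‖ ≤ ε ∧ mNorm (μ - μ₀) ≤ ε := by
  classical
  set p := μ.toJordanDecomposition.posPart with hp
  set q := μ.toJordanDecomposition.negPart with hq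
  set ε₁ : ℝ := ε / 2 with hε₁
  have hc0 : 0 < 1 - ε₁ := by simp only [hε₁]; linarith
  set A : Set K := {t | 1 - ε₁ < f t} with hAdef
  set B : Set K := {t | f t < -(1 - ε₁)} with hBdef
  have hAopen : IsOpen A := isOpen_lt continuous_const f.continuous
  have hBopen : IsOpen B := isOpen_lt f.continuous continuous_const
  have hA : MeasurableSet A := hAopen.measurableSet
  have hB : MeasurableSet B := hBopen.measurableSet
  set a := (p A).toReal with ha
  set b := (q B).toReal with hb
  set a' := (p Aᶜ).toReal with ha'
  set b' := (q Bᶜ).toReal with hb'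
  have ha0 : 0 ≤ a := ENNReal.toReal_nonneg
  have hb0 : 0 ≤ b := ENNReal.toReal_nonneg
  have ha'0 : 0 ≤ a' := ENNReal.toReal_nonneg
  have hb'0 : 0 ≤ b' := ENNReal.toReal_nonneg
  have hpA : a + a' = (p Set.univ).toReal := by
    rw [ha, ha', ← ENNReal.toReal_add (measure_ne_top _ _) (measure_ne_top _ _),
      measure_add_measure_compl hA]
  have hqB : b + b' = (q Set.univ).toReal := by
    rw [hb, hb', ← ENNReal.toReal_add (measure_ne_top _ _) (measure_ne_top _ _),
      measure_add_measure_compl hB]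
  have hmN : mNorm μ = (p Set.univ).toReal + (q Set.univ).toReal := by
    rw [mNorm, SignedMeasure.totalVariation, Measure.add_apply,
      ENNReal.toReal_add (measure_ne_top _ _) (measure_ne_top _ _)]
  -- integrability of f
  have hint : ∀ (ρ : Measure K) [IsFiniteMeasure ρ], Integrable (f : K → ℝ) ρ := by
    intro ρ _
    exact Integrable.mono' (integrable_const ‖f‖)
      f.continuous.measurable.aestronglyMeasurable
      (Filter.Eventually.of_forall fun x => f.norm_coe_le_norm x)
  have habs : ∀ x, |(f : K → ℝ) x| ≤ 1 := by
    intro x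
    have := (f.norm_coe_le_norm x).trans hf
    rwa [Real.norm_eq_abs] at this
  have hfle : ∀ x, (f : K → ℝ) x ≤ 1 := fun x => (abs_le.mp (habs x)).2
  have hfge : ∀ x, -1 ≤ (f : K → ℝ) x := fun x => (abs_le.mp (habs x)).1
  have E1 : ∫ x, f x ∂p ≤ a + (1 - ε₁) * a' :=
    int_le_piece p f (hint p) A hA (1 - ε₁) hfle
      (fun x hx => not_lt.1 hx)
  have E2 : ∫ x, (-(f x)) ∂q ≤ b + (1 - ε₁) * b' := by
    refine int_le_piece q (fun x => -(f x)) (hint q).neg B hB (1 - ε₁)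
      (fun x => by show -(f x) ≤ 1; linarith [hfge x]) (fun x hx => ?_)
    have hx' : ¬ (f x < -(1 - ε₁)) := hx
    show -(f x) ≤ 1 - ε₁
    linarith [not_lt.1 hx']
  have hchain : 1 - ε ^ 2 / 6 ≤ (a + b) + (1 - ε₁) * (a' + b') := by
    have hsInt : sInt μ f = ∫ x, f x ∂p - ∫ x, f x ∂q := rfl
    have hneg : ∫ x, (-(f x)) ∂q = -∫ x, f x ∂q := integral_neg _
    nlinarith [h, E1, E2]
  set m := a + b with hm
  set sv := a' + b' with hsv
  have hmsum : m + sv = mNorm μ := by rw [hmN]; linarith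
  have hs3 : sv ≤ ε / 3 := by nlinarith
  have hmlb : 1 - ε ^ 2 / 6 - sv ≤ m := by nlinarith
  have hm0 : (0:ℝ) < m := by nlinarith
  have hs0 : 0 ≤ sv := by positivity
  have hm1 : m ≤ 1 := by linarith
  -- the scaling factor
  set rr : ℝ≥0 := (m.toNNReal)⁻¹ with hrrdef
  have hmco : ((m.toNNReal : ℝ)) = m := Real.coe_toNNReal m hm0.le
  have hrrco : (rr : ℝ) = 1 / m := by
    rw [hrrdef, NNReal.coe_inv, hmco, one_div]
  have hrr1 : 1 ≤ rr := by
    rw [← NNReal.coe_le_coe, hrrco, NNReal.coe_one]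
    rw [le_div_iff₀ hm0]; linarith
  have hrrm : (rr : ℝ) * m = 1 := by rw [hrrco]; field_simp
  -- the Jordan decomposition of μ₀
  have hsing : (rr • p.restrict A) ⟂ₘ (rr • q.restrict B) :=
    μ.toJordanDecomposition.mutuallySingular.mono_ac
      ((Measure.absolutelyContinuous_of_le Measure.restrict_le_self).smul_left rr)
      ((Measure.absolutelyContinuous_of_le Measure.restrict_le_self).smul_left rr)
  have hsmul_eq : ∀ (c : ℝ≥0) (ν : Measure K), c • ν = (c : ℝ≥0∞) • ν := fun c ν => rfl
  have hfinA : IsFiniteMeasure (rr • p.restrict A) := by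
    rw [hsmul_eq]
    exact Measure.smul_finite _ ENNReal.coe_ne_top
  have hfinB : IsFiniteMeasure (rr • q.restrict B) := by
    rw [hsmul_eq]
    exact Measure.smul_finite _ ENNReal.coe_ne_top
  set jd : JordanDecomposition K :=
    { posPart := rr • p.restrict A, negPart := rr • q.restrict B,
      posPart_finite := hfinA, negPart_finite := hfinB,
      mutuallySingular := hsing } with hjddef
  set μ₀ : SignedMeasure K := jd.toSignedMeasure with hμ₀
  have hjd : μ₀.toJordanDecomposition = jd :=
    JordanDecomposition.toJordanDecomposition_toSignedMeasure jd
  -- f₀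
  set f₀ : C(K, ℝ) := ⟨fun t => max (-1) (min 1 ((1 - ε₁)⁻¹ * f t)),
    (continuous_const.max (continuous_const.min (continuous_const.mul f.continuous)))⟩
    with hf₀def
  have hf₀A : ∀ t ∈ A, f₀ t = 1 := by
    intro t ht
    have ht' : 1 - ε₁ < f t := ht
    have h1 : (1:ℝ) ≤ (1 - ε₁)⁻¹ * f t := by
      have h2 : (1 - ε₁)⁻¹ * (1 - ε₁) ≤ (1 - ε₁)⁻¹ * f t :=
        mul_le_mul_of_nonneg_left ht'.le (inv_nonneg.2 hc0.le)
      rwa [inv_mul_cancel₀ hc0.ne'] at h2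
    show max (-1) (min 1 ((1 - ε₁)⁻¹ * f t)) = 1
    rw [min_eq_left h1, max_eq_right (by norm_num)]
  have hf₀B : ∀ t ∈ B, f₀ t = -1 := by
    intro t ht
    have ht' : f t < -(1 - ε₁) := ht
    have h1 : (1 - ε₁)⁻¹ * f t ≤ -1 := by
      have : (1 - ε₁)⁻¹ * f t ≤ (1 - ε₁)⁻¹ * (-(1 - ε₁)) :=
        mul_le_mul_of_nonneg_left ht'.le (inv_nonneg.2 hc0.le)
      rwa [mul_neg, inv_mul_cancel₀ hc0.ne'] at this
    show max (-1) (min 1 ((1 - ε₁)⁻¹ * f t)) = -1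
    rw [min_eq_right (h1.trans (by norm_num)), max_eq_left h1]
  have hf₀bd : ∀ t, |f₀ t| ≤ 1 := by
    intro t
    show |max (-1) (min 1 ((1 - ε₁)⁻¹ * f t))| ≤ 1
    rw [abs_le]
    constructor
    · exact le_max_left _ _
    · exact max_le (by norm_num) (min_le_left _ _)
  -- a point where |f₀| = 1
  have hm0' : 0 < a ∨ 0 < b := by
    by_contra hcon
    push_neg at hcon
    have hza : a = 0 := le_antisymm hcon.1 ha0
    have hzb : b = 0 := le_antisymm hcon.2 hb0
    rw [hm, hza, hzb] at hm0
    norm_num at hm0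
  have hex : ∃ t, |f₀ t| = 1 := by
    rcases hm0' with hpa | hqb
    · have : p A ≠ 0 := by
        intro h0; rw [ha, h0] at hpa; simp at hpa
      obtain ⟨t, ht⟩ := nonempty_of_measure_ne_zero this
      exact ⟨t, by rw [hf₀A t ht]; norm_num⟩
    · have : q B ≠ 0 := by
        intro h0; rw [hb, h0] at hqb; simp at hqb
      obtain ⟨t, ht⟩ := nonempty_of_measure_ne_zero this
      exact ⟨t, by rw [hf₀B t ht]; norm_num⟩
  have hnormf₀ : ‖f₀‖ = 1 := by
    obtain ⟨t, ht⟩ := hex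
    refine le_antisymm ((ContinuousMap.norm_le _ (by norm_num)).2 fun x => by
      rw [Real.norm_eq_abs]; exact hf₀bd x) ?_
    calc (1:ℝ) = ‖f₀ t‖ := by rw [Real.norm_eq_abs, ht]
      _ ≤ ‖f₀‖ := f₀.norm_coe_le_norm t
  -- ‖f - f₀‖ ≤ ε
  have hε₁pos : 0 < ε₁ := by rw [hε₁]; positivity
  have hff₀ : ‖f - f₀‖ ≤ ε := by
    refine (ContinuousMap.norm_le _ hε0.le).2 fun x => ?_
    rw [ContinuousMap.sub_apply, Real.norm_eq_abs]
    have hfx₀ : f₀ x = max (-1) (min 1 ((1 - ε₁)⁻¹ * f x)) := rfl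
    rw [hfx₀, abs_le]
    rcases abs_le.mp (habs x) with ⟨hl, hr⟩
    rcases le_or_gt ((1 - ε₁)⁻¹ * f x) (-1) with hca | hca
    · rw [min_eq_right (hca.trans (by norm_num)), max_eq_left hca]
      have hkey : f x ≤ -(1 - ε₁) := by
        have h2 : (1 - ε₁) * ((1 - ε₁)⁻¹ * f x) ≤ (1 - ε₁) * (-1) :=
          mul_le_mul_of_nonneg_left hca hc0.le
        rw [← mul_assoc, mul_inv_cancel₀ hc0.ne', one_mul] at h2
        linarith
      constructor <;> linarith
    · rcases le_or_gt 1 ((1 - ε₁)⁻¹ * f x) with hcb | hcb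
      · rw [min_eq_left hcb, max_eq_right (by norm_num)]
        have hkey : 1 - ε₁ ≤ f x := by
          have h2 : (1 - ε₁) * 1 ≤ (1 - ε₁) * ((1 - ε₁)⁻¹ * f x) :=
            mul_le_mul_of_nonneg_left hcb hc0.le
          rw [← mul_assoc, mul_inv_cancel₀ hc0.ne', one_mul, mul_one] at h2
          linarith
        constructor <;> linarith
      · rw [min_eq_right hcb.le, max_eq_right hca.le]
        have hw : (1 - ε₁) * ((1 - ε₁)⁻¹ * f x) = f x := by
          rw [← mul_assoc, mul_inv_cancel₀ hc0.ne', one_mul]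
        have h3 : ε₁ * ((1 - ε₁)⁻¹ * f x) < ε₁ * 1 :=
          mul_lt_mul_of_pos_left hcb hε₁pos
        have h4 : ε₁ * (-1) < ε₁ * ((1 - ε₁)⁻¹ * f x) :=
          mul_lt_mul_of_pos_left hca hε₁pos
        constructor <;> nlinarith
  -- regularity of μ₀
  obtain ⟨S, hSm, hpS, hqS⟩ := μ.toJordanDecomposition.mutuallySingular
  set E : Set K := (A ∩ Sᶜ) ∪ (B ∩ S) with hEdef
  have hEm : MeasurableSet E := (hA.inter hSm.compl).union (hB.inter hSm)
  have hpE : p.restrict E = p.restrict A := by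
    apply Measure.restrict_congr_set
    rw [MeasureTheory.ae_eq_set]
    constructor
    · refine measure_mono_null (fun x hx => ?_) hpS
      rcases hx.1 with h1 | h1
      · exact absurd h1.1 hx.2
      · exact h1.2
    · refine measure_mono_null (fun x hx => ?_) hpS
      by_contra hxS
      exact hx.2 (Or.inl ⟨hx.1, hxS⟩)
  have hqE : q.restrict E = q.restrict B := by
    apply Measure.restrict_congr_set
    rw [MeasureTheory.ae_eq_set]
    constructor
    · refine measure_mono_null (fun x hx => ?_) hqS
      rcases hx.1 with h1 | h1
      · exact h1.2
      · exact absurd h1.1 hx.2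
    · refine measure_mono_null (fun x hx => ?_) hqS
      intro hxS
      exact hx.2 (Or.inr ⟨hx.1, hxS⟩)
  have htveq : μ₀.totalVariation = ((rr : ℝ≥0∞) • (p + q)).restrict E := by
    rw [SignedMeasure.totalVariation, hjd]
    show rr • p.restrict A + rr • q.restrict B = _
    rw [Measure.restrict_smul, Measure.restrict_add, hpE, hqE, hsmul_eq, hsmul_eq, smul_add]
  have hpqreg : (p + q).Regular := by
    have : μ.totalVariation = p + q := rfl
    rw [← this]; exact hμreg
  have hreg : μ₀.totalVariation.Regular := by
    rw [htveq]
    haveI := hpqreg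
    haveI : ((rr : ℝ≥0∞) • (p + q)).Regular := Measure.Regular.smul ENNReal.coe_ne_top
    haveI : IsFiniteMeasure ((rr : ℝ≥0∞) • (p + q)) :=
      Measure.smul_finite _ ENNReal.coe_ne_top
    exact Measure.Regular.restrict_of_measure_ne_top (measure_ne_top _ _)
  -- mNorm μ₀ = 1
  have hmn₀ : mNorm μ₀ = 1 := by
    rw [mNorm, SignedMeasure.totalVariation, hjd]
    show ((rr • p.restrict A + rr • q.restrict B) Set.univ).toReal = 1
    rw [Measure.add_apply, ENNReal.toReal_add (measure_ne_top _ _) (measure_ne_top _ _),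
      Measure.smul_apply, Measure.smul_apply, Measure.restrict_apply_univ,
      Measure.restrict_apply_univ, ENNReal.toReal_smul, ENNReal.toReal_smul,
      NNReal.smul_def, NNReal.smul_def, smul_eq_mul, smul_eq_mul]
    have : (rr : ℝ) * a + (rr : ℝ) * b = (rr : ℝ) * m := by rw [hm]; ring
    rw [this, hrrm]
  -- sInt μ₀ f₀ = 1
  have hip : ∫ x, f₀ x ∂(p.restrict A) = a := by
    have h1 : ∫ x in A, f₀ x ∂p = ∫ _x in A, (1:ℝ) ∂p :=
      setIntegral_congr_fun hA (fun x hx => hf₀A x hx)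
    rw [show (∫ x, f₀ x ∂(p.restrict A)) = ∫ x in A, f₀ x ∂p from rfl, h1]
    simp [measureReal_def, ha]
  have hiq : ∫ x, f₀ x ∂(q.restrict B) = -b := by
    have h1 : ∫ x in B, f₀ x ∂q = ∫ _x in B, (-1:ℝ) ∂q :=
      setIntegral_congr_fun hB (fun x hx => hf₀B x hx)
    rw [show (∫ x, f₀ x ∂(q.restrict B)) = ∫ x in B, f₀ x ∂q from rfl, h1]
    simp [hb, measureReal_def]
  have hsint₀ : sInt μ₀ (f₀ : K → ℝ) = 1 := by
    rw [sInt, hjd]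
    show (∫ x, f₀ x ∂(rr • p.restrict A)) - ∫ x, f₀ x ∂(rr • q.restrict B) = 1
    rw [hsmul_eq, hsmul_eq, integral_smul_measure, integral_smul_measure, hip, hiq]
    simp only [ENNReal.coe_toReal, smul_eq_mul]
    have : (rr : ℝ) * a - (rr : ℝ) * (-b) = (rr : ℝ) * m := by rw [hm]; ring
    rw [this, hrrm]
  -- the distance bound
  have hr1co : ((rr - 1 : ℝ≥0) : ℝ) = (rr : ℝ) - 1 := by
    rw [NNReal.coe_sub hrr1, NNReal.coe_one]
  have hfinP' : IsFiniteMeasure ((rr - 1) • q.restrict B) := by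
    rw [hsmul_eq]; exact Measure.smul_finite _ ENNReal.coe_ne_top
  have hfinN' : IsFiniteMeasure ((rr - 1) • p.restrict A) := by
    rw [hsmul_eq]; exact Measure.smul_finite _ ENNReal.coe_ne_top
  have hfinP'' : IsFiniteMeasure (((rr - 1 : ℝ≥0) : ℝ≥0∞) • q.restrict B) :=
    Measure.smul_finite _ ENNReal.coe_ne_top
  have hfinN'' : IsFiniteMeasure (((rr - 1 : ℝ≥0) : ℝ≥0∞) • p.restrict A) :=
    Measure.smul_finite _ ENNReal.coe_ne_top
  set P : Measure K := p.restrict Aᶜ + (rr - 1) • q.restrict B with hPdef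
  set N : Measure K := q.restrict Bᶜ + (rr - 1) • p.restrict A with hNdef
  haveI : IsFiniteMeasure P := by rw [hPdef]; infer_instance
  haveI : IsFiniteMeasure N := by rw [hNdef]; infer_instance
  have hμi : ∀ i : Set K, MeasurableSet i → μ i = (p i).toReal - (q i).toReal := by
    intro i hi
    have h1 : μ = p.toSignedMeasure - q.toSignedMeasure := by
      conv_lhs => rw [← μ.toSignedMeasure_toJordanDecomposition]
      rfl
    rw [h1, Measure.toSignedMeasure_sub_apply hi, measureReal_def, measureReal_def]
  have hμ₀i : ∀ i : Set K, MeasurableSet i →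
      μ₀ i = ((rr : ℝ) * (p (i ∩ A)).toReal) - ((rr : ℝ) * (q (i ∩ B)).toReal) := by
    intro i hi
    have h1 : μ₀ = (rr • p.restrict A).toSignedMeasure
        - (rr • q.restrict B).toSignedMeasure := rfl
    rw [h1, Measure.toSignedMeasure_sub_apply hi, hsmul_eq, hsmul_eq, measureReal_def, measureReal_def,
      Measure.smul_apply, Measure.smul_apply,
      Measure.restrict_apply hi, Measure.restrict_apply hi, smul_eq_mul, smul_eq_mul,
      ENNReal.toReal_mul, ENNReal.toReal_mul, ENNReal.coe_toReal]
  have hrepr : ∀ i : Set K, MeasurableSet i →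
      (μ - μ₀) i = (P i).toReal - (N i).toReal := by
    intro i hi
    have hPi : (P i).toReal = (p (i ∩ Aᶜ)).toReal + ((rr : ℝ) - 1) * (q (i ∩ B)).toReal := by
      rw [hPdef, Measure.add_apply, hsmul_eq,
        ENNReal.toReal_add (measure_ne_top _ _) (measure_ne_top _ _),
        Measure.restrict_apply hi, Measure.smul_apply, Measure.restrict_apply hi,
        smul_eq_mul, ENNReal.toReal_mul, ENNReal.coe_toReal, hr1co]
    have hNi : (N i).toReal = (q (i ∩ Bᶜ)).toReal + ((rr : ℝ) - 1) * (p (i ∩ A)).toReal := by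
      rw [hNdef, Measure.add_apply, hsmul_eq,
        ENNReal.toReal_add (measure_ne_top _ _) (measure_ne_top _ _),
        Measure.restrict_apply hi, Measure.smul_apply, Measure.restrict_apply hi,
        smul_eq_mul, ENNReal.toReal_mul, ENNReal.coe_toReal, hr1co]
    have hpi : (p i).toReal = (p (i ∩ A)).toReal + (p (i ∩ Aᶜ)).toReal := by
      rw [← ENNReal.toReal_add (measure_ne_top _ _) (measure_ne_top _ _)]
      congr 1
      rw [← measure_inter_add_diff i hA, Set.diff_eq]
    have hqi : (q i).toReal = (q (i ∩ B)).toReal + (q (i ∩ Bᶜ)).toReal := by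
      rw [← ENNReal.toReal_add (measure_ne_top _ _) (measure_ne_top _ _)]
      congr 1
      rw [← measure_inter_add_diff i hB, Set.diff_eq]
    rw [VectorMeasure.sub_apply, hμi i hi, hμ₀i i hi, hPi, hNi, hpi, hqi]
    ring
  have hbound := mNorm_le_of_repr (μ - μ₀) hrepr
  have hPu : (P Set.univ).toReal = a' + ((rr : ℝ) - 1) * b := by
    rw [hPdef, Measure.add_apply, hsmul_eq,
      ENNReal.toReal_add (measure_ne_top _ _) (measure_ne_top _ _),
      Measure.restrict_apply_univ, Measure.smul_apply, Measure.restrict_apply_univ,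
      smul_eq_mul, ENNReal.toReal_mul, ENNReal.coe_toReal, hr1co]
  have hNu : (N Set.univ).toReal = b' + ((rr : ℝ) - 1) * a := by
    rw [hNdef, Measure.add_apply, hsmul_eq,
      ENNReal.toReal_add (measure_ne_top _ _) (measure_ne_top _ _),
      Measure.restrict_apply_univ, Measure.smul_apply, Measure.restrict_apply_univ,
      smul_eq_mul, ENNReal.toReal_mul, ENNReal.coe_toReal, hr1co]
  have hfinal : mNorm (μ - μ₀) ≤ ε := by
    rw [hPu, hNu] at hbound
    have h5 : ((rr : ℝ) - 1) * b + ((rr : ℝ) - 1) * a = 1 - m := by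
      have : ((rr : ℝ) - 1) * b + ((rr : ℝ) - 1) * a = (rr : ℝ) * m - m := by
        rw [hm]; ring
      rw [this, hrrm]
    have hsq : ε ^ 2 ≤ ε := by nlinarith
    linarith
  exact ⟨f₀, μ₀, hreg, hnormf₀, hmn₀, hsint₀, hff₀, hfinal⟩
end
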